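/- Let (μ,ν,λ) ∈ Par_n^3 satisfy every extended Horn inequality. Then |μ ∧ ν| ≥ (|μ| + |ν| − |λ|)/2, and the same holds for every permutation of the roles of μ, ν, λ. -/

import Mathlib

/-- `μ` is a partition with at most `n` parts: a weakly decreasing sequence
`μ 0 ≥ μ 1 ≥ ⋯` of naturals (the paper's part `μ_{i+1}` is `μ i`, i.e. we use
0-indexing) vanishing from index `n` on. -/
def IsPartitionN (n : ℕ) (μ : ℕ → ℕ) : Prop :=
  Antitone μ ∧ ∀ i, n ≤ i → μ i = 0

/-- The cells `(row, column)` (both 0-indexed) of the skew shape `lam/mu`. -/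
def skewCells (lam mu : ℕ → ℕ) : Set (ℕ × ℕ) :=
  {p | mu p.1 ≤ p.2 ∧ p.2 < lam p.1}

/-- `T` is a Littlewood–Richardson skew tableau of shape `lam/mu` and content
`nu`: the shape `mu` is contained in `lam`, rows weakly increase, columns
strictly increase, the (0-indexed) letter `t` occurs `nu t` times, and every
prefix of the reverse reading word (rows read right-to-left, top-to-bottom)
contains at least as many letters `t` as letters `t+1`. -/
def IsLRTableau (lam mu nu : ℕ → ℕ) (T : ℕ × ℕ → ℕ) : Prop :=
  (∀ i, mu i ≤ lam i) ∧
  (∀ i j j', mu i ≤ j → j ≤ j' → j' < lam i → T (i, j) ≤ T (i, j')) ∧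
  (∀ i j, (i, j) ∈ skewCells lam mu → (i + 1, j) ∈ skewCells lam mu →
    T (i, j) < T (i + 1, j)) ∧
  (∀ t, Set.ncard {p ∈ skewCells lam mu | T p = t} = nu t) ∧
  (∀ i j t,
    Set.ncard {p ∈ skewCells lam mu |
        T p = t + 1 ∧ (p.1 < i ∨ (p.1 = i ∧ j ≤ p.2))} ≤
      Set.ncard {p ∈ skewCells lam mu |
        T p = t ∧ (p.1 < i ∨ (p.1 = i ∧ j ≤ p.2))})

/-- The Littlewood–Richardson coefficient `c^{lam}_{mu,nu}`: the number of
Littlewood–Richardson skew tableaux of shape `lam/mu` and content `nu`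
(tableaux are normalized to vanish off the shape). -/
noncomputable def lrCoeff (lam mu nu : ℕ → ℕ) : ℕ :=
  Set.ncard {T : ℕ × ℕ → ℕ | IsLRTableau lam mu nu T ∧
    ∀ p ∉ skewCells lam mu, T p = 0}

/-- The Newell–Littlewood number
`N_{μ,ν,λ} = ∑_{α,β,γ} c^μ_{α,β} c^ν_{α,γ} c^λ_{β,γ}`, realized as the number
of tuples `((α, β, γ), (T₁, T₂, T₃))` where `α, β, γ` are partitions and
`T₁, T₂, T₃` are Littlewood–Richardson tableaux witnessing the coefficients
`c^μ_{α,β}`, `c^ν_{α,γ}` and `c^λ_{β,γ}` respectively. -/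
noncomputable def nlNumber (mu nu lam : ℕ → ℕ) : ℕ :=
  Set.ncard {x : ((ℕ → ℕ) × (ℕ → ℕ) × (ℕ → ℕ)) ×
      ((ℕ × ℕ → ℕ) × (ℕ × ℕ → ℕ) × (ℕ × ℕ → ℕ)) |
    Antitone x.1.1 ∧ Antitone x.1.2.1 ∧ Antitone x.1.2.2 ∧
    (IsLRTableau mu x.1.1 x.1.2.1 x.2.1 ∧
      ∀ p ∉ skewCells mu x.1.1, x.2.1 p = 0) ∧
    (IsLRTableau nu x.1.1 x.1.2.2 x.2.2.1 ∧
      ∀ p ∉ skewCells nu x.1.1, x.2.2.1 p = 0) ∧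
    (IsLRTableau lam x.1.2.1 x.1.2.2 x.2.2.2 ∧
      ∀ p ∉ skewCells lam x.1.2.1, x.2.2.2 p = 0)}

/-- For `I = {i₁ < ⋯ < i_d} ⊆ {0, 1, 2, …}` (the 0-indexed version of the
paper's subsets of positive integers), `tauPartition I` is `τ(I)`, i.e. the
partition whose (0-indexed) part `t` is `i_{d-t} − (d−t−1) - 1`; for the
paper's 1-indexed sets this is `τ(I) = (i_d − d ≥ ⋯ ≥ i₂ − 2 ≥ i₁ − 1)`. -/
def tauPartition (I : Finset ℕ) : ℕ → ℕ := fun t =>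
  if t < I.card then
    (I.sort (· ≤ ·)).getD (I.card - 1 - t) 0 - (I.card - 1 - t)
  else 0

/-- Conditions (I)–(III) defining the set `𝒢_n` of data for the extended Horn
inequalities: all six sets are subsets of `{0, …, n−1}` (the 0-indexed version
of `[n] = {1, …, n}`), `A ∩ A' = B ∩ B' = C ∩ C' = ∅`,
`|A| = |B'| + |C'|`, `|B| = |A'| + |C'|`, `|C| = |A'| + |B'|`, and there exist
`A₁, A₂, B₁, B₂, C₁, C₂ ⊆ {0, …, n−1}` with `|A₁| = |A₂| = |A'|`,
`|B₁| = |B₂| = |B'|`, `|C₁| = |C₂| = |C'|` such that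
`c^{τ(A')}_{τ(A₁),τ(A₂)}, c^{τ(B')}_{τ(B₁),τ(B₂)}, c^{τ(C')}_{τ(C₁),τ(C₂)} > 0`
and `c^{τ(A)}_{τ(B₁),τ(C₂)}, c^{τ(B)}_{τ(C₁),τ(A₂)}, c^{τ(C)}_{τ(A₁),τ(B₂)} > 0`. -/
def IsExtHornTuple (n : ℕ) (A A' B B' C C' : Finset ℕ) : Prop :=
  A ⊆ Finset.range n ∧ A' ⊆ Finset.range n ∧ B ⊆ Finset.range n ∧
    B' ⊆ Finset.range n ∧ C ⊆ Finset.range n ∧ C' ⊆ Finset.range n ∧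
  Disjoint A A' ∧ Disjoint B B' ∧ Disjoint C C' ∧
  A.card = B'.card + C'.card ∧ B.card = A'.card + C'.card ∧
    C.card = A'.card + B'.card ∧
  ∃ A₁ A₂ B₁ B₂ C₁ C₂ : Finset ℕ,
    A₁ ⊆ Finset.range n ∧ A₂ ⊆ Finset.range n ∧ B₁ ⊆ Finset.range n ∧
      B₂ ⊆ Finset.range n ∧ C₁ ⊆ Finset.range n ∧ C₂ ⊆ Finset.range n ∧
    A₁.card = A'.card ∧ A₂.card = A'.card ∧ B₁.card = B'.card ∧
      B₂.card = B'.card ∧ C₁.card = C'.card ∧ C₂.card = C'.card ∧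
    0 < lrCoeff (tauPartition A') (tauPartition A₁) (tauPartition A₂) ∧
    0 < lrCoeff (tauPartition B') (tauPartition B₁) (tauPartition B₂) ∧
    0 < lrCoeff (tauPartition C') (tauPartition C₁) (tauPartition C₂) ∧
    0 < lrCoeff (tauPartition A) (tauPartition B₁) (tauPartition C₂) ∧
    0 < lrCoeff (tauPartition B) (tauPartition C₁) (tauPartition A₂) ∧
    0 < lrCoeff (tauPartition C) (tauPartition A₁) (tauPartition B₂)

/-- `(μ, ν, lam)` satisfies every extended Horn inequality (with ambient set
`{0, …, n−1}`). -/
def SatisfiesExtHorn (n : ℕ) (μ ν lam : ℕ → ℕ) : Prop :=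
  ∀ A A' B B' C C' : Finset ℕ, IsExtHornTuple n A A' B B' C C' →
    (0 : ℤ) ≤ (∑ i ∈ A, (μ i : ℤ)) - (∑ i ∈ A', (μ i : ℤ)) +
      (∑ j ∈ B, (ν j : ℤ)) - (∑ j ∈ B', (ν j : ℤ)) +
      (∑ k ∈ C, (lam k : ℤ)) - (∑ k ∈ C', (lam k : ℤ))


lemma tau_range (k : ℕ) : tauPartition (Finset.range k) = fun _ => 0 := by
  funext t
  simp only [tauPartition, Finset.card_range, Finset.sort_range]
  split
  · next h =>
    rw [List.getD_eq_getElem _ 0 (by simpa [List.length_range] using by omega)]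
    simp [List.getElem_range]
  · rfl

lemma tau_empty : tauPartition ∅ = fun _ => 0 := by
  rw [← Finset.range_zero, tau_range]

lemma tau_vanish (I : Finset ℕ) (t : ℕ) (ht : I.card ≤ t) : tauPartition I t = 0 := by
  simp [tauPartition, Nat.not_lt.mpr ht]

private lemma getD_step (l : List ℕ) (h : l.Pairwise (·<·)) :
    ∀ k i, i + k < l.length → l.getD i 0 + k ≤ l.getD (i + k) 0 := by
  intro k
  induction k with
  | zero => intro i _; simp
  | succ k ih =>
    intro i hik
    have h1 := ih i (by omega)
    have hik1 : i + k < l.length := by omega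
    have hik2 : i + k + 1 < l.length := by omega
    have e1 := List.getD_eq_getElem l 0 hik1
    have e2 := List.getD_eq_getElem l 0 hik2
    have hp := (List.pairwise_iff_getElem.mp h) (i+k) (i+k+1) hik1 hik2 (by omega)
    have h2 : l.getD (i + k) 0 < l.getD (i + k + 1) 0 := by rw [e1, e2]; exact hp
    have : i + (k + 1) = i + k + 1 := by omega
    rw [this]; omega

lemma tau_antitone (I : Finset ℕ) : Antitone (tauPartition I) := by
  intro t t' htt'
  by_cases h' : t' < I.card
  · have h : t < I.card := lt_of_le_of_lt htt' h'
    simp only [tauPartition, if_pos h, if_pos h']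
    have hlen : (I.sort (· ≤ ·)).length = I.card := Finset.length_sort _
    have hsorted : (I.sort (· ≤ ·)).Pairwise (·<·) := (Finset.sortedLT_sort I).pairwise
    set l := I.sort (· ≤ ·)
    have hj : I.card - 1 - t' ≤ I.card - 1 - t := by omega
    have key := getD_step l hsorted ((I.card - 1 - t) - (I.card - 1 - t')) (I.card - 1 - t')
      (by omega)
    have : I.card - 1 - t' + ((I.card - 1 - t) - (I.card - 1 - t')) = I.card - 1 - t := by omega
    rw [this] at key
    omega
  · simp [tauPartition, h']

lemma lr_self_zero (f : ℕ → ℕ) : 0 < lrCoeff f f (fun _ => 0) := by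
  have hcells : skewCells f f = ∅ := by
    ext p; simp only [skewCells, Set.mem_setOf_eq, Set.mem_empty_iff_false, iff_false]
    omega
  have hset : {T : ℕ × ℕ → ℕ | IsLRTableau f f (fun _ => 0) T ∧
      ∀ p ∉ skewCells f f, T p = 0} = {fun _ => 0} := by
    ext T
    simp only [Set.mem_setOf_eq, Set.mem_singleton_iff]
    constructor
    · rintro ⟨-, hv⟩
      funext p
      exact hv p (by rw [hcells]; exact Set.notMem_empty p)
    · rintro rfl
      refine ⟨⟨fun i => le_rfl, fun i j j' _ _ _ => le_rfl, ?_, ?_, ?_⟩, fun p _ => rfl⟩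
      · intro i j hmem _
        rw [hcells] at hmem
        exact absurd hmem (Set.notMem_empty _)
      · intro t
        simp [hcells]
      · intro i j t
        simp [hcells]
  rw [lrCoeff, hset, Set.ncard_singleton]
  norm_num

lemma lr_zero_self (f : ℕ → ℕ) (hf : Antitone f) (m : ℕ) (hm : ∀ i, m ≤ i → f i = 0) :
    0 < lrCoeff f (fun _ => 0) f := by
  have hcells : skewCells f (fun _ => 0) = {p : ℕ × ℕ | p.2 < f p.1} := by
    ext p; simp [skewCells]
  have hsub : skewCells f (fun _ => 0) ⊆
      ↑(Finset.range m ×ˢ Finset.range (f 0)) := by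
    rw [hcells]
    intro p hp
    simp only [Finset.coe_product, Set.mem_prod, Finset.mem_coe, Finset.mem_range]
    constructor
    · by_contra hpm
      have := hm p.1 (by omega)
      simp only [Set.mem_setOf_eq] at hp
      omega
    · exact lt_of_lt_of_le hp (hf (Nat.zero_le p.1))
  have hfin : (skewCells f (fun _ => 0)).Finite :=
    Set.Finite.subset (Finset.finite_toSet _) hsub
  set T : ℕ × ℕ → ℕ := fun p => if p.2 < f p.1 then p.1 else 0 with hTdef
  -- content sets
  have hcontent : ∀ t, {p ∈ skewCells f (fun _ => 0) | T p = t} =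
      (fun y => ((t, y) : ℕ × ℕ)) '' Set.Iio (f t) := by
    intro t
    ext p
    simp only [hcells, Set.mem_setOf_eq, Set.mem_image, Set.mem_Iio, hTdef]
    constructor
    · rintro ⟨h1, h2⟩
      rw [if_pos h1] at h2
      subst h2
      exact ⟨p.2, h1, rfl⟩
    · rintro ⟨y, hy, rfl⟩
      exact ⟨hy, if_pos hy⟩
  have hTmem : IsLRTableau f (fun _ => 0) f T ∧
      ∀ p ∉ skewCells f (fun _ => 0), T p = 0 := by
    refine ⟨⟨fun i => Nat.zero_le _, ?_, ?_, ?_, ?_⟩, ?_⟩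
    · -- rows
      intro i j j' _ hjj' hj'
      simp only [hTdef]
      rw [if_pos (by omega), if_pos hj']
    · -- columns
      intro i j hij hij1
      rw [hcells] at hij hij1
      simp only [Set.mem_setOf_eq] at hij hij1
      simp only [hTdef]
      rw [if_pos hij, if_pos hij1]
      omega
    · -- content
      intro t
      rw [hcontent t]
      rw [Set.ncard_image_of_injective _ (fun a b h => by simpa using congrArg Prod.snd h)]
      rw [← Finset.coe_range, Set.ncard_coe_finset, Finset.card_range]
    · -- ballot
      intro i j t
      have himg : (fun p : ℕ × ℕ => ((t, p.2) : ℕ × ℕ)) ''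
          {p ∈ skewCells f (fun _ => 0) | T p = t + 1 ∧ (p.1 < i ∨ (p.1 = i ∧ j ≤ p.2))} ⊆
          {p ∈ skewCells f (fun _ => 0) | T p = t ∧ (p.1 < i ∨ (p.1 = i ∧ j ≤ p.2))} := by
        rintro q ⟨p, ⟨hpc, hpt, hpr⟩, rfl⟩
        rw [hcells] at hpc ⊢
        simp only [Set.mem_setOf_eq] at hpc ⊢
        simp only [hTdef, if_pos hpc] at hpt
        have hcell : p.2 < f t := lt_of_lt_of_le hpc (hf (by omega))
        refine ⟨hcell, ?_, ?_⟩
        · simp only [hTdef]; rw [if_pos hcell]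
        · rcases hpr with h | ⟨h, h2⟩
          · left; omega
          · left; omega
      have hinj : Set.InjOn (fun p : ℕ × ℕ => ((t, p.2) : ℕ × ℕ))
          {p ∈ skewCells f (fun _ => 0) | T p = t + 1 ∧ (p.1 < i ∨ (p.1 = i ∧ j ≤ p.2))} := by
        rintro p ⟨hpc, hpt, -⟩ q ⟨hqc, hqt, -⟩ h
        rw [hcells] at hpc hqc
        simp only [Set.mem_setOf_eq] at hpc hqc
        simp only [hTdef, if_pos hpc] at hpt
        simp only [hTdef, if_pos hqc] at hqt
        have h2 : p.2 = q.2 := by simpa using congrArg Prod.snd h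
        exact Prod.ext (by omega) h2
      calc Set.ncard {p ∈ skewCells f (fun _ => 0) | T p = t + 1 ∧ (p.1 < i ∨ (p.1 = i ∧ j ≤ p.2))}
          = Set.ncard ((fun p : ℕ × ℕ => ((t, p.2) : ℕ × ℕ)) ''
            {p ∈ skewCells f (fun _ => 0) | T p = t + 1 ∧ (p.1 < i ∨ (p.1 = i ∧ j ≤ p.2))}) :=
            (Set.ncard_image_of_injOn hinj).symm
        _ ≤ _ := Set.ncard_le_ncard himg
            (hfin.subset (fun p hp => hp.1))
    · -- vanishing
      intro p hp
      rw [hcells] at hp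
      simp only [Set.mem_setOf_eq] at hp
      simp only [hTdef, if_neg hp]
  -- finiteness of the tableau set
  have hbound : ∀ T' ∈ {T' : ℕ × ℕ → ℕ | IsLRTableau f (fun _ => 0) f T' ∧
      ∀ p ∉ skewCells f (fun _ => 0), T' p = 0}, ∀ p, T' p ≤ m := by
    rintro T' ⟨⟨-, -, -, hcont, -⟩, hv⟩ p
    by_cases hp : p ∈ skewCells f (fun _ => 0)
    · by_contra hgt
      have h0 : f (T' p) = 0 := hm _ (by omega)
      have := hcont (T' p)
      have hpos : 0 < Set.ncard {q ∈ skewCells f (fun _ => 0) | T' q = T' p} := by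
        rw [Set.ncard_pos (hfin.subset (fun q hq => hq.1))]
        exact ⟨p, hp, rfl⟩
      omega
    · rw [hv p hp]; exact Nat.zero_le m
  have hsetfin : {T' : ℕ × ℕ → ℕ | IsLRTableau f (fun _ => 0) f T' ∧
      ∀ p ∉ skewCells f (fun _ => 0), T' p = 0}.Finite := by
    set K := Finset.range m ×ˢ Finset.range (f 0) with hK
    set F := fun (T' : ℕ × ℕ → ℕ) (p : K) =>
      (⟨min (T' ↑p) m, by omega⟩ : Fin (m + 1)) with hF
    apply Set.Finite.of_finite_image (f := F)
    · exact Set.toFinite _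
    · intro T1 h1 T2 h2 hFT
      funext p
      by_cases hp : p ∈ skewCells f (fun _ => 0)
      · have hpK : p ∈ K := hsub hp
        have := congrFun hFT (⟨p, hpK⟩ : K)
        simp only [hF, Fin.mk.injEq] at this
        have b1 := hbound T1 h1 p
        have b2 := hbound T2 h2 p
        omega
      · rw [h1.2 p hp, h2.2 p hp]
  rw [lrCoeff]
  rw [Set.ncard_pos hsetfin]
  exact ⟨T, hTmem⟩

lemma lr_xx0 (I : Finset ℕ) : 0 < lrCoeff (tauPartition I) (tauPartition I)
    (tauPartition (Finset.range k)) := by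
  rw [tau_range]; exact lr_self_zero _

lemma lr_x0x (I : Finset ℕ) (k : ℕ) : 0 < lrCoeff (tauPartition I)
    (tauPartition (Finset.range k)) (tauPartition I) := by
  rw [tau_range]
  exact lr_zero_self _ (tau_antitone I) I.card (tau_vanish I)

lemma horn_tuple1 (n : ℕ) (T : Finset ℕ) (hT : T ⊆ Finset.range n) :
    IsExtHornTuple n T (Finset.range n \ T) (Finset.range n \ T) T (Finset.range n) ∅ := by
  have hcard : (Finset.range n \ T).card + T.card = n := by
    rw [Finset.card_sdiff_add_card_eq_card hT, Finset.card_range]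
  have hcle : (Finset.range n \ T).card ≤ n := by omega
  refine ⟨hT, Finset.sdiff_subset, Finset.sdiff_subset, hT, le_rfl, Finset.empty_subset _,
    Finset.disjoint_sdiff, Finset.sdiff_disjoint, Finset.disjoint_empty_right _,
    by simp, by simp, by rw [Finset.card_range]; omega,
    Finset.range (Finset.range n \ T).card, Finset.range n \ T,
    T, Finset.range T.card, ∅, ∅,
    by rw [Finset.range_subset_range]; omega, Finset.sdiff_subset, hT,
    by rw [Finset.range_subset_range]; exact le_of_le_of_eq (Finset.card_le_card hT) (Finset.card_range n), Finset.empty_subset _,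
    Finset.empty_subset _,
    Finset.card_range _, rfl, rfl, Finset.card_range _, rfl, rfl,
    ?_, ?_, ?_, ?_, ?_, ?_⟩
  · rw [tau_range]; exact lr_zero_self _ (tau_antitone _) _ (tau_vanish _)
  · exact lr_xx0 _
  · rw [← Finset.range_zero]; exact lr_xx0 _
  · rw [← Finset.range_zero]; exact lr_xx0 _
  · rw [← Finset.range_zero]; exact lr_x0x _ _
  · rw [tau_range, tau_range, tau_range]
    exact lr_self_zero (fun _ => 0)

lemma horn_tuple2 (n : ℕ) (T : Finset ℕ) (hT : T ⊆ Finset.range n) :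
    IsExtHornTuple n T (Finset.range n \ T) (Finset.range n) ∅ (Finset.range n \ T) T := by
  have hcard : (Finset.range n \ T).card + T.card = n := by
    rw [Finset.card_sdiff_add_card_eq_card hT, Finset.card_range]
  refine ⟨hT, Finset.sdiff_subset, le_rfl, Finset.empty_subset _, Finset.sdiff_subset, hT,
    Finset.disjoint_sdiff, Finset.disjoint_empty_right _, Finset.sdiff_disjoint,
    by simp, by rw [Finset.card_range]; omega, by simp,
    Finset.range n \ T, Finset.range (Finset.range n \ T).card, ∅, ∅,
    Finset.range T.card, T,
    Finset.sdiff_subset, by rw [Finset.range_subset_range]; omega, Finset.empty_subset _,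
    Finset.empty_subset _,
    by rw [Finset.range_subset_range]; exact le_of_le_of_eq (Finset.card_le_card hT) (Finset.card_range n),
    hT, rfl, Finset.card_range _, rfl, rfl, Finset.card_range _, rfl,
    ?_, ?_, ?_, ?_, ?_, ?_⟩
  · exact lr_xx0 _
  · rw [← Finset.range_zero]; exact lr_xx0 _
  · exact lr_x0x _ _
  · rw [← Finset.range_zero]; exact lr_x0x _ _
  · rw [tau_range, tau_range, tau_range]; exact lr_self_zero (fun _ => 0)
  · rw [← Finset.range_zero]; exact lr_xx0 _

lemma horn_tuple3 (n : ℕ) (T : Finset ℕ) (hT : T ⊆ Finset.range n) :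
    IsExtHornTuple n (Finset.range n) ∅ T (Finset.range n \ T) (Finset.range n \ T) T := by
  have hcard : (Finset.range n \ T).card + T.card = n := by
    rw [Finset.card_sdiff_add_card_eq_card hT, Finset.card_range]
  refine ⟨le_rfl, Finset.empty_subset _, hT, Finset.sdiff_subset, Finset.sdiff_subset, hT,
    Finset.disjoint_empty_right _, Finset.disjoint_sdiff, Finset.sdiff_disjoint,
    by rw [Finset.card_range]; omega, by simp, by simp,
    ∅, ∅, Finset.range (Finset.range n \ T).card, Finset.range n \ T,
    T, Finset.range T.card,
    Finset.empty_subset _, Finset.empty_subset _,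
    by rw [Finset.range_subset_range]; omega, Finset.sdiff_subset, hT,
    by rw [Finset.range_subset_range]; exact le_of_le_of_eq (Finset.card_le_card hT) (Finset.card_range n),
    rfl, rfl, Finset.card_range _, rfl, rfl, Finset.card_range _,
    ?_, ?_, ?_, ?_, ?_, ?_⟩
  · rw [← Finset.range_zero]; exact lr_xx0 _
  · exact lr_x0x _ _
  · exact lr_xx0 _
  · rw [tau_range, tau_range, tau_range]; exact lr_self_zero (fun _ => 0)
  · rw [← Finset.range_zero]; exact lr_xx0 _
  · rw [← Finset.range_zero]; exact lr_x0x _ _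

lemma fam1 (n : ℕ) (μ ν lam : ℕ → ℕ) (h : SatisfiesExtHorn n μ ν lam)
    (T : Finset ℕ) (hT : T ⊆ Finset.range n) :
    0 ≤ (∑ i ∈ T, (μ i : ℤ)) - (∑ i ∈ Finset.range n \ T, (μ i : ℤ)) +
      (∑ i ∈ Finset.range n \ T, (ν i : ℤ)) - (∑ i ∈ T, (ν i : ℤ)) +
      (∑ i ∈ Finset.range n, (lam i : ℤ)) := by
  have := h T (Finset.range n \ T) (Finset.range n \ T) T (Finset.range n) ∅
    (horn_tuple1 n T hT)
  simpa using this

lemma fam2 (n : ℕ) (μ ν lam : ℕ → ℕ) (h : SatisfiesExtHorn n μ ν lam)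
    (T : Finset ℕ) (hT : T ⊆ Finset.range n) :
    0 ≤ (∑ i ∈ T, (μ i : ℤ)) - (∑ i ∈ Finset.range n \ T, (μ i : ℤ)) +
      (∑ i ∈ Finset.range n \ T, (lam i : ℤ)) - (∑ i ∈ T, (lam i : ℤ)) +
      (∑ i ∈ Finset.range n, (ν i : ℤ)) := by
  have := h T (Finset.range n \ T) (Finset.range n) ∅ (Finset.range n \ T) T
    (horn_tuple2 n T hT)
  simp at this
  linarith

lemma fam3 (n : ℕ) (μ ν lam : ℕ → ℕ) (h : SatisfiesExtHorn n μ ν lam)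
    (T : Finset ℕ) (hT : T ⊆ Finset.range n) :
    0 ≤ (∑ i ∈ T, (ν i : ℤ)) - (∑ i ∈ Finset.range n \ T, (ν i : ℤ)) +
      (∑ i ∈ Finset.range n \ T, (lam i : ℤ)) - (∑ i ∈ T, (lam i : ℤ)) +
      (∑ i ∈ Finset.range n, (μ i : ℤ)) := by
  have := h (Finset.range n) ∅ T (Finset.range n \ T) (Finset.range n \ T) T
    (horn_tuple3 n T hT)
  simp at this
  linarith

lemma min_key (n : ℕ) (α β : ℕ → ℕ) (c : ℤ)
    (h : ∀ T ⊆ Finset.range n,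
      0 ≤ (∑ i ∈ T, (α i : ℤ)) - (∑ i ∈ Finset.range n \ T, (α i : ℤ)) +
        (∑ i ∈ Finset.range n \ T, (β i : ℤ)) - (∑ i ∈ T, (β i : ℤ)) + c) :
    (∑ i ∈ Finset.range n, (α i : ℤ)) + (∑ i ∈ Finset.range n, (β i : ℤ)) - c ≤
      2 * ∑ i ∈ Finset.range n, (min (α i) (β i) : ℤ) := by
  classical
  set S := (Finset.range n).filter (fun i => α i ≤ β i) with hS
  have hSsub : S ⊆ Finset.range n := Finset.filter_subset _ _
  have hh := h S hSsub
  have hsplit : ∀ f : ℕ → ℤ, (∑ i ∈ Finset.range n \ S, f i) + ∑ i ∈ S, f i =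
      ∑ i ∈ Finset.range n, f i := fun f => Finset.sum_sdiff hSsub
  have hminS : ∑ i ∈ S, (min (α i) (β i) : ℤ) = ∑ i ∈ S, (α i : ℤ) := by
    apply Finset.sum_congr rfl
    intro i hi
    rw [hS, Finset.mem_filter] at hi
    exact min_eq_left (by exact_mod_cast hi.2)
  have hminSc : ∑ i ∈ Finset.range n \ S, (min (α i) (β i) : ℤ) =
      ∑ i ∈ Finset.range n \ S, (β i : ℤ) := by
    apply Finset.sum_congr rfl
    intro i hi
    rw [Finset.mem_sdiff] at hi
    have : ¬ α i ≤ β i := by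
      intro hle
      exact hi.2 (by rw [hS, Finset.mem_filter]; exact ⟨hi.1, hle⟩)
    exact min_eq_right (by exact_mod_cast (by omega : β i ≤ α i))
  have e1 := hsplit (fun i => (α i : ℤ))
  have e2 := hsplit (fun i => (β i : ℤ))
  have e3 := hsplit (fun i => (min (α i) (β i) : ℤ))
  linarith

lemma min_key' (n : ℕ) (α β : ℕ → ℕ) (c : ℤ)
    (h : ∀ T ⊆ Finset.range n,
      0 ≤ (∑ i ∈ T, (α i : ℤ)) - (∑ i ∈ Finset.range n \ T, (α i : ℤ)) +
        (∑ i ∈ Finset.range n \ T, (β i : ℤ)) - (∑ i ∈ T, (β i : ℤ)) + c) :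
    (∑ i ∈ Finset.range n, (β i : ℤ)) + (∑ i ∈ Finset.range n, (α i : ℤ)) - c ≤
      2 * ∑ i ∈ Finset.range n, (min (β i) (α i) : ℤ) := by
  apply min_key n β α c
  intro T hT
  have := h (Finset.range n \ T) Finset.sdiff_subset
  rw [Finset.sdiff_sdiff_eq_self hT] at this
  linarith

/-- Proposition 2.5(v): the extended Horn inequalities imply
`|μ ∧ ν| ≥ (|μ| + |ν| − |lam|) / 2` and all its `S₃`-permutations (stated as
`|μ| + |ν| − |lam| ≤ 2 |μ ∧ ν|`).  The permutation `σ` permutes the roles of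
`μ, ν, lam`. -/
theorem wedge_of_satisfiesExtHorn (n : ℕ) (μ ν lam : ℕ → ℕ)
    (hμ : IsPartitionN n μ) (hν : IsPartitionN n ν) (hlam : IsPartitionN n lam)
    (hEH : SatisfiesExtHorn n μ ν lam) (σ : Equiv.Perm (Fin 3)) :
    (∑ i ∈ Finset.range n, ((![μ, ν, lam] (σ 0)) i : ℤ)) +
      (∑ i ∈ Finset.range n, ((![μ, ν, lam] (σ 1)) i : ℤ)) -
      (∑ i ∈ Finset.range n, ((![μ, ν, lam] (σ 2)) i : ℤ)) ≤
      2 * ∑ i ∈ Finset.range n,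
        (min ((![μ, ν, lam] (σ 0)) i) ((![μ, ν, lam] (σ 1)) i) : ℤ) := by
  have key : (σ 0 = 0 ∧ σ 1 = 1 ∧ σ 2 = 2) ∨ (σ 0 = 1 ∧ σ 1 = 0 ∧ σ 2 = 2) ∨
      (σ 0 = 0 ∧ σ 1 = 2 ∧ σ 2 = 1) ∨ (σ 0 = 2 ∧ σ 1 = 0 ∧ σ 2 = 1) ∨
      (σ 0 = 1 ∧ σ 1 = 2 ∧ σ 2 = 0) ∨ (σ 0 = 2 ∧ σ 1 = 1 ∧ σ 2 = 0) := by
    revert σ; decide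
  rcases key with ⟨h0,h1,h2⟩|⟨h0,h1,h2⟩|⟨h0,h1,h2⟩|⟨h0,h1,h2⟩|⟨h0,h1,h2⟩|⟨h0,h1,h2⟩ <;>
    rw [h0, h1, h2] <;>
    simp only [Matrix.cons_val_zero, Matrix.cons_val_one, Matrix.head_cons,
      Matrix.cons_val_two, Matrix.tail_cons]
  · exact min_key n μ ν _ (fun T hT => fam1 n μ ν lam hEH T hT)
  · exact min_key' n μ ν _ (fun T hT => fam1 n μ ν lam hEH T hT)
  · exact min_key n μ lam _ (fun T hT => fam2 n μ ν lam hEH T hT)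
  · exact min_key' n μ lam _ (fun T hT => fam2 n μ ν lam hEH T hT)
  · exact min_key n ν lam _ (fun T hT => fam3 n μ ν lam hEH T hT)
  · exact min_key' n ν lam _ (fun T hT => fam3 n μ ν lam hEH T hT)
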